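/- Let Γ : I → ℂ³ be a normalized lift with ⟨Γ,Γ⟩ = ⟨Γ,Γ'⟩ = ⟨Γ',Γ''⟩ = 0, ⟨Γ',Γ'⟩ = −⟨Γ,Γ''⟩ = 1, define b = (1/2)⟨Γ'',Γ''⟩. If h : J → I is a smooth change of parameter and Γ̃ = (1/h')·(Γ∘h), then b̃ = (h')²·(b∘h) + h'''/h' − (3/2)(h''/h')², i.e. the quadratic density transforms with the Schwarzian derivative of h. -/

import Mathlib

open Complex

/-- The pseudo-Hermitian inner product ⟨z,w⟩ = i(conj z¹ w³ − conj z³ w¹) + conj z² w². -/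
noncomputable def herm (z w : Fin 3 → ℂ) : ℂ :=
  Complex.I * ((starRingEnd ℂ) (z 0) * w 2 - (starRingEnd ℂ) (z 2) * w 0) +
    (starRingEnd ℂ) (z 1) * w 1

/-- The quadratic Fubini density b = (1/2)⟨Γ'', Γ''⟩ of a lift Γ. -/
noncomputable def quadDensity (Γ : ℝ → (Fin 3 → ℂ)) (t : ℝ) : ℂ :=
  (1/2) * herm (iteratedDeriv 2 Γ t) (iteratedDeriv 2 Γ t)

lemma herm_swap (z w : Fin 3 → ℂ) : herm w z = (starRingEnd ℂ) (herm z w) := by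
  simp only [herm, map_add, map_mul, map_sub, Complex.conj_I, Complex.conj_conj]
  ring

lemma herm_comb (a b c : ℂ) (x y z : Fin 3 → ℂ) :
    herm (a • x + b • y + c • z) (a • x + b • y + c • z)
      = ((starRingEnd ℂ) a * a) * herm x x + ((starRingEnd ℂ) a * b) * herm x y
        + ((starRingEnd ℂ) a * c) * herm x z
        + ((starRingEnd ℂ) b * a) * herm y x + ((starRingEnd ℂ) b * b) * herm y y
        + ((starRingEnd ℂ) b * c) * herm y z
        + ((starRingEnd ℂ) c * a) * herm z x + ((starRingEnd ℂ) c * b) * herm z y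
        + ((starRingEnd ℂ) c * c) * herm z z := by
  simp only [herm, Pi.add_apply, Pi.smul_apply, smul_eq_mul, map_add, map_mul]
  ring

lemma real_smul_pi (r : ℝ) (v : Fin 3 → ℂ) : r • v = ((r : ℂ)) • v := by
  funext i
  simp [Complex.real_smul]

theorem stmt3 (Γ : ℝ → (Fin 3 → ℂ)) (hΓ : ContDiff ℝ (⊤ : ℕ∞) Γ)
    (h00 : ∀ t, herm (Γ t) (Γ t) = 0)
    (h01 : ∀ t, herm (Γ t) (iteratedDeriv 1 Γ t) = 0)
    (h12 : ∀ t, herm (iteratedDeriv 1 Γ t) (iteratedDeriv 2 Γ t) = 0)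
    (h11 : ∀ t, herm (iteratedDeriv 1 Γ t) (iteratedDeriv 1 Γ t) = 1)
    (h02 : ∀ t, herm (Γ t) (iteratedDeriv 2 Γ t) = -1)
    (h : ℝ → ℝ) (hh : ContDiff ℝ (⊤ : ℕ∞) h) (hh' : ∀ s, deriv h s ≠ 0) :
    ∀ s, quadDensity (fun u => (((deriv h u : ℝ) : ℂ))⁻¹ • Γ (h u)) s
      = ((deriv h s : ℝ) : ℂ)^2 * quadDensity Γ (h s)
        + ((iteratedDeriv 3 h s / deriv h s
            - (3/2) * (iteratedDeriv 2 h s / deriv h s)^2 : ℝ) : ℂ) := by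
  intro s
  -- smoothness of derivatives
  have hd1 : ContDiff ℝ (⊤ : ℕ∞) (deriv h) := (contDiff_infty_iff_deriv.mp hh).2
  have hd2 : ContDiff ℝ (⊤ : ℕ∞) (deriv (deriv h)) := (contDiff_infty_iff_deriv.mp hd1).2
  have hΓ1 : ContDiff ℝ (⊤ : ℕ∞) (deriv Γ) := (contDiff_infty_iff_deriv.mp hΓ).2
  -- basic HasDerivAt facts
  have Hh : ∀ t, HasDerivAt h (deriv h t) t := fun t => (hh.differentiable (by simp) t).hasDerivAt
  have Hp : ∀ t, HasDerivAt (deriv h) (deriv (deriv h) t) t :=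
    fun t => (hd1.differentiable (by simp) t).hasDerivAt
  have Hq : ∀ t, HasDerivAt (deriv (deriv h)) (deriv (deriv (deriv h)) t) t :=
    fun t => (hd2.differentiable (by simp) t).hasDerivAt
  have HΓ : ∀ t, HasDerivAt Γ (deriv Γ t) t := fun t => (hΓ.differentiable (by simp) t).hasDerivAt
  have HΓ1 : ∀ t, HasDerivAt (deriv Γ) (deriv (deriv Γ) t) t :=
    fun t => (hΓ1.differentiable (by simp) t).hasDerivAt
  -- complex valued versions
  have HP : ∀ t, HasDerivAt (fun u => ((deriv h u : ℝ) : ℂ)) (((deriv (deriv h) t : ℝ) : ℂ)) t :=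
    fun t => (Hp t).ofReal_comp
  have HQ : ∀ t, HasDerivAt (fun u => ((deriv (deriv h) u : ℝ) : ℂ))
      (((deriv (deriv (deriv h)) t : ℝ) : ℂ)) t := fun t => (Hq t).ofReal_comp
  have hPne : ∀ t, ((deriv h t : ℝ) : ℂ) ≠ 0 := fun t => Complex.ofReal_ne_zero.mpr (hh' t)
  -- compositions
  have Hcomp : ∀ t, HasDerivAt (fun u => Γ (h u)) (deriv h t • deriv Γ (h t)) t :=
    fun t => (HΓ (h t)).scomp t (Hh t)
  have Hcomp1 : ∀ t, HasDerivAt (fun u => deriv Γ (h u)) (deriv h t • deriv (deriv Γ) (h t)) t :=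
    fun t => (HΓ1 (h t)).scomp t (Hh t)
  -- the coefficient function
  set c : ℝ → ℂ := fun u => -((deriv (deriv h) u : ℝ) : ℂ) / ((deriv h u : ℝ) : ℂ)^2 with hc_def
  -- first derivative of the rescaled lift
  have step1 : ∀ t, HasDerivAt (fun u => (((deriv h u : ℝ) : ℂ))⁻¹ • Γ (h u))
      (c t • Γ (h t) + deriv Γ (h t)) t := by
    intro t
    have hinv0 := (hasDerivAt_const t (1 : ℂ)).div (HP t) (hPne t)
    have hfun : (fun u => (((deriv h u : ℝ) : ℂ))⁻¹)
        = fun u => 1 / ((deriv h u : ℝ) : ℂ) := by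
      funext u; rw [one_div]
    have hinv : HasDerivAt (fun u => (((deriv h u : ℝ) : ℂ))⁻¹)
        (-((deriv (deriv h) t : ℝ) : ℂ) / ((deriv h t : ℝ) : ℂ)^2) t := by
      rw [hfun]
      refine hinv0.congr_deriv ?_
      ring
    have := hinv.smul (Hcomp t)
    refine this.congr_deriv ?_
    rw [real_smul_pi, smul_smul, inv_mul_cancel₀ (hPne t), one_smul, add_comm]
  -- second derivative
  have hpow : HasDerivAt (fun u => ((deriv h u : ℝ) : ℂ)^2)
      (2 * ((deriv h s : ℝ) : ℂ) * ((deriv (deriv h) s : ℝ) : ℂ)) s := by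
    have h2 : (fun u => ((deriv h u : ℝ) : ℂ)^2)
        = fun u => ((deriv h u : ℝ) : ℂ) * ((deriv h u : ℝ) : ℂ) := funext fun u => pow_two _
    rw [h2]
    refine ((HP s).mul (HP s)).congr_deriv ?_
    ring
  have hc' := ((HQ s).neg).div hpow (pow_ne_zero 2 (hPne s))
  have step2 := (hc'.smul (Hcomp s)).add (Hcomp1 s)
  -- identify the second iterated derivative
  have hderiv1 : deriv (fun u => (((deriv h u : ℝ) : ℂ))⁻¹ • Γ (h u))
      = fun t => c t • Γ (h t) + deriv Γ (h t) := funext fun t => (step1 t).deriv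
  set P : ℂ := ((deriv h s : ℝ) : ℂ) with hP_def
  set Q : ℂ := ((deriv (deriv h) s : ℝ) : ℂ) with hQ_def
  set R : ℂ := ((deriv (deriv (deriv h)) s : ℝ) : ℂ) with hR_def
  set A : ℂ := (-R * P^2 - (-Q) * (2 * P * Q)) / (P^2)^2 with hA_def
  set B : ℂ := (-Q / P^2) * P with hB_def
  have hit2 : iteratedDeriv 2 (fun u => (((deriv h u : ℝ) : ℂ))⁻¹ • Γ (h u)) s
      = A • Γ (h s) + B • deriv Γ (h s) + P • deriv (deriv Γ) (h s) := by
    rw [show (2 : ℕ) = 1 + 1 from rfl, iteratedDeriv_succ, iteratedDeriv_one, hderiv1]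
    have step2' : HasDerivAt (fun t => c t • Γ (h t) + deriv Γ (h t))
        ((-Q / P^2) • deriv h s • deriv Γ (h s) + A • Γ (h s) + deriv h s • deriv (deriv Γ) (h s)) s := step2
    rw [step2'.deriv]
    rw [real_smul_pi (deriv h s) (deriv Γ (h s)), real_smul_pi (deriv h s) (deriv (deriv Γ) (h s))]
    rw [smul_smul]
    abel
  -- herm values
  have e1 : deriv Γ (h s) = iteratedDeriv 1 Γ (h s) := by rw [iteratedDeriv_one]
  have e2 : deriv (deriv Γ) (h s) = iteratedDeriv 2 Γ (h s) := by
    rw [show (2 : ℕ) = 1 + 1 from rfl, iteratedDeriv_succ, iteratedDeriv_one]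
  have hxx := h00 (h s)
  have hxy := h01 (h s)
  have hyz := h12 (h s)
  have hyy := h11 (h s)
  have hxz := h02 (h s)
  have hyx : herm (iteratedDeriv 1 Γ (h s)) (Γ (h s)) = 0 := by rw [herm_swap, hxy, map_zero]
  have hzx : herm (iteratedDeriv 2 Γ (h s)) (Γ (h s)) = -1 := by
    rw [herm_swap, hxz]; simp
  have hzy : herm (iteratedDeriv 2 Γ (h s)) (iteratedDeriv 1 Γ (h s)) = 0 := by
    rw [herm_swap, hyz, map_zero]
  -- conjugates of the real coefficients
  have hAc : (starRingEnd ℂ) A = A := by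
    rw [hA_def, hP_def, hQ_def, hR_def]
    simp [map_div₀, map_mul, map_pow, map_neg, map_sub, map_ofNat, Complex.conj_ofReal]
  have hBc : (starRingEnd ℂ) B = B := by
    rw [hB_def, hP_def, hQ_def]
    simp [map_div₀, map_mul, map_pow, map_neg, map_sub, map_ofNat, Complex.conj_ofReal]
  have hPc : (starRingEnd ℂ) P = P := by rw [hP_def]; exact Complex.conj_ofReal _
  -- compute
  have hzz : herm (iteratedDeriv 2 Γ (h s)) (iteratedDeriv 2 Γ (h s)) = 2 * quadDensity Γ (h s) := by
    simp only [quadDensity]; ring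
  rw [show quadDensity (fun u => (((deriv h u : ℝ) : ℂ))⁻¹ • Γ (h u)) s = (1/2) * herm (iteratedDeriv 2 (fun u => (((deriv h u : ℝ) : ℂ))⁻¹ • Γ (h u)) s) (iteratedDeriv 2 (fun u => (((deriv h u : ℝ) : ℂ))⁻¹ • Γ (h u)) s) from rfl, hit2, e1, e2, herm_comb, hAc, hBc, hPc, hxx, hxy, hxz, hyx, hyy, hyz,
    hzx, hzy, hzz]
  -- now pure algebra
  have hit3 : iteratedDeriv 3 h s = deriv (deriv (deriv h)) s := by
    simp [iteratedDeriv_succ, iteratedDeriv_one]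
  have hit2h : iteratedDeriv 2 h s = deriv (deriv h) s := by
    simp [iteratedDeriv_succ, iteratedDeriv_one]
  rw [hit3, hit2h]
  push_cast
  rw [hA_def, hB_def, ← hP_def, ← hQ_def, ← hR_def]
  have hP0 : P ≠ 0 := hPne s
  field_simp [hP0]
  ring_nf
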